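/- If a connected graph G on n vertices has BFS width at most B, then the reconstruction algorithm that (1) queries d(v,u) for a fixed root v and all u, (2) queries d(a,b) for all pairs a,b with |d(v,a) − d(v,b)| ≤ 1, correctly recovers the edge set of G, and the number of distance queries it makes is at most (n−1) + (n−1)(3B−1)/2 = O(nB). -/

import Mathlib

open SimpleGraph Finset

/-- Number of vertices at distance exactly `i` from `v`. -/
noncomputable def layerCard {V : Type*} (G : SimpleGraph V) (v : V) (i : ℕ) : ℕ :=
  ({u : V | G.dist v u = i}).ncard

/-- BFS width of `G` from root `v`: the maximum layer size. -/
noncomputable def bfswFrom {V : Type*} (G : SimpleGraph V) (v : V) : ℕ :=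
  sSup (Set.range (layerCard G v))

/-- BFS width of `G`: maximum over roots. -/
noncomputable def bfsw {V : Type*} (G : SimpleGraph V) : ℕ :=
  sSup (Set.range (bfswFrom G))

/-- Minimum BFS width of `G`: minimum over roots. -/
noncomputable def bfswMin {V : Type*} (G : SimpleGraph V) : ℕ :=
  sInf (Set.range (bfswFrom G))

/-- Bandwidth of `G`: least `b` such that some linear layout has all edges of length `≤ b`. -/
noncomputable def bw {V : Type*} [Fintype V] (G : SimpleGraph V) : ℕ :=
  sInf { b : ℕ | ∃ f : V ≃ Fin (Fintype.card V),
    ∀ u w : V, G.Adj u w → ((f u : ℤ) - (f w : ℤ)).natAbs ≤ b }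

/-- Reconstruction from a distance oracle: if every BFS layer of $G$ (from every
root) has at most $B$ vertices, then (1) the algorithm that queries distances from a
fixed root $v$ and then queries all pairs lying in the same or adjacent layers
correctly identifies the edges (an edge is exactly a queried pair at distance 1),
and (2) the total number of queries is at most $(n-1) + (n-1)(3B-1)/2$. -/
theorem reconstruction_query_complexity {V : Type*} [Fintype V]
    (G : SimpleGraph V) (hG : G.Connected) (B : ℕ)
    (hB : ∀ (w : V) (i : ℕ), layerCard G w i ≤ B) (v : V) :
    (∀ a b : V, G.Adj a b ↔
      ((a = v ∨ b = v ∨ (G.dist v a ≤ G.dist v b + 1 ∧ G.dist v b ≤ G.dist v a + 1))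
        ∧ G.dist a b = 1)) ∧
    (Fintype.card V - 1) +
      ({p : Sym2 V | ¬ p.IsDiag ∧ v ∉ p ∧
        ∃ a b : V, p = s(a, b) ∧
          G.dist v a ≤ G.dist v b + 1 ∧ G.dist v b ≤ G.dist v a + 1}).ncard
      ≤ (Fintype.card V - 1) + (Fintype.card V - 1) * (3 * B - 1) / 2 := by
  classical
  have hL : ∀ j : ℕ, (univ.filter (fun u => G.dist v u = j)).card ≤ B := by
    intro j
    have : (univ.filter (fun u => G.dist v u = j)).card = layerCard G v j := by
      rw [layerCard, Set.ncard_eq_toFinset_card']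
      congr 1
      ext u
      simp
    rw [this]; exact hB v j
  constructor
  · intro a b
    constructor
    · intro h
      have h1 : G.dist a b = 1 := dist_eq_one_iff_adj.2 h
      have h1' : G.dist b a = 1 := dist_eq_one_iff_adj.2 h.symm
      refine ⟨Or.inr (Or.inr ⟨?_, ?_⟩), h1⟩
      · calc G.dist v a ≤ G.dist v b + G.dist b a := hG.dist_triangle
          _ = G.dist v b + 1 := by rw [h1']
      · calc G.dist v b ≤ G.dist v a + G.dist a b := hG.dist_triangle
          _ = G.dist v a + 1 := by rw [h1]
    · rintro ⟨_, h1⟩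
      exact dist_eq_one_iff_adj.1 h1
  · refine Nat.add_le_add_left ?_ _
    set D : V → V → Prop := fun a b =>
      G.dist v a ≤ G.dist v b + 1 ∧ G.dist v b ≤ G.dist v a + 1 with hD
    set S : Set (Sym2 V) := {p : Sym2 V | ¬ p.IsDiag ∧ v ∉ p ∧
        ∃ a b : V, p = s(a, b) ∧ D a b} with hS
    set T : Finset (V × V) :=
      univ.filter (fun x : V × V => x.1 ≠ x.2 ∧ x.1 ≠ v ∧ x.2 ≠ v ∧ D x.1 x.2) with hT
    have hSn : S.ncard = S.toFinset.card := Set.ncard_eq_toFinset_card' S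
    -- 2 * |S| ≤ |T|
    have hmap : ∀ x ∈ T, s(Prod.fst x, Prod.snd x) ∈ S.toFinset := by
      rintro ⟨a, b⟩ hx
      simp only [hT, mem_filter] at hx
      obtain ⟨-, hab, hav, hbv, hd⟩ := hx
      simp only [Set.mem_toFinset, hS, Set.mem_setOf_eq]
      refine ⟨by simpa using hab, by simp [Sym2.mem_iff]; tauto, a, b, rfl, hd⟩
    have hcardT : T.card = ∑ p ∈ S.toFinset,
        (T.filter (fun x => s(Prod.fst x, Prod.snd x) = p)).card :=
      Finset.card_eq_sum_card_fiberwise hmap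
    have hfiber2 : ∀ p ∈ S.toFinset,
        2 ≤ (T.filter (fun x => s(Prod.fst x, Prod.snd x) = p)).card := by
      intro p hp
      simp only [Set.mem_toFinset, hS, Set.mem_setOf_eq] at hp
      obtain ⟨hnd, hvp, a, b, rfl, hd⟩ := hp
      have hab : a ≠ b := by simpa using hnd
      have hav : a ≠ v := by rintro rfl; exact hvp (Sym2.mem_mk_left a b)
      have hbv : b ≠ v := by rintro rfl; exact hvp (Sym2.mem_mk_right a b)
      have hsub : ({(a, b), (b, a)} : Finset (V × V)) ⊆
          T.filter (fun x => s(Prod.fst x, Prod.snd x) = s(a, b)) := by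
        intro x hx
        simp only [mem_insert, mem_singleton] at hx
        rcases hx with rfl | rfl
        · simp only [mem_filter, hT, mem_univ, true_and]
          exact ⟨⟨hab, hav, hbv, hd⟩, by simp⟩
        · simp only [mem_filter, hT, mem_univ, true_and]
          exact ⟨⟨hab.symm, hbv, hav, hd.2, hd.1⟩, by simp [Sym2.eq_swap]⟩
      have h2 : ({(a, b), (b, a)} : Finset (V × V)).card = 2 :=
        Finset.card_pair (by simp [hab])
      calc 2 = ({(a, b), (b, a)} : Finset (V × V)).card := h2.symm
        _ ≤ _ := Finset.card_le_card hsub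
    have hTlow : 2 * S.toFinset.card ≤ T.card := by
      rw [hcardT, mul_comm]
      calc S.toFinset.card * 2 = ∑ _p ∈ S.toFinset, 2 := by rw [Finset.sum_const, smul_eq_mul]
        _ ≤ _ := Finset.sum_le_sum hfiber2
    -- |T| ≤ (n-1)(3B-1)
    have hmap2 : ∀ x ∈ T, Prod.fst x ∈ univ.erase v := by
      rintro ⟨a, b⟩ hx
      simp only [hT, mem_filter] at hx
      simp [hx.2.2.1]
    have hcardT2 : T.card = ∑ a ∈ univ.erase v,
        (T.filter (fun x => Prod.fst x = a)).card :=
      Finset.card_eq_sum_card_fiberwise hmap2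
    have hfiberhi : ∀ a ∈ univ.erase v,
        (T.filter (fun x => Prod.fst x = a)).card ≤ 3 * B - 1 := by
      intro a ha
      have hav : a ≠ v := by simpa using (Finset.mem_erase.1 ha).1
      set i := G.dist v a with hi
      have hipos : 0 < i := hG.pos_dist_of_ne (Ne.symm hav)
      set P : Finset V := ((univ.filter (fun u => G.dist v u = i - 1)) ∪
          (univ.filter (fun u => G.dist v u = i)) ∪
          (univ.filter (fun u => G.dist v u = i + 1))).erase a with hP
      have hstep : (T.filter (fun x => Prod.fst x = a)).card ≤ P.card := by
        apply Finset.card_le_card_of_injOn Prod.snd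
        · rintro ⟨a', b⟩ hx
          replace hx : (a', b) ∈ T.filter (fun x => Prod.fst x = a) := hx
          simp only [mem_filter, hT] at hx
          obtain ⟨⟨-, hab, -, -, hd1, hd2⟩, rfl⟩ := hx
          show b ∈ P
          simp only [hP, Finset.mem_erase, Finset.mem_union, mem_filter, mem_univ, true_and]
          refine ⟨Ne.symm hab, ?_⟩
          rw [← hi] at hd1 hd2
          omega
        · rintro ⟨a1, b1⟩ h1 ⟨a2, b2⟩ h2 hb
          simp only [mem_filter, Finset.mem_coe] at h1 h2
          simp only [Prod.mk.injEq]
          exact ⟨h1.2.trans h2.2.symm, hb⟩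
      have haP : a ∈ (univ.filter (fun u => G.dist v u = i - 1)) ∪
          (univ.filter (fun u => G.dist v u = i)) ∪
          (univ.filter (fun u => G.dist v u = i + 1)) := by
        simp [hi]
      have hcard : P.card = ((univ.filter (fun u => G.dist v u = i - 1)) ∪
          (univ.filter (fun u => G.dist v u = i)) ∪
          (univ.filter (fun u => G.dist v u = i + 1))).card - 1 :=
        Finset.card_erase_of_mem haP
      have hun : ((univ.filter (fun u => G.dist v u = i - 1)) ∪
          (univ.filter (fun u => G.dist v u = i)) ∪
          (univ.filter (fun u => G.dist v u = i + 1))).card ≤ 3 * B := by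
        calc _ ≤ _ := Finset.card_union_le _ _
          _ ≤ ((univ.filter (fun u => G.dist v u = i - 1)).card +
              (univ.filter (fun u => G.dist v u = i)).card) +
              (univ.filter (fun u => G.dist v u = i + 1)).card :=
            Nat.add_le_add_right (Finset.card_union_le _ _) _
          _ ≤ B + B + B := by
            exact Nat.add_le_add (Nat.add_le_add (hL _) (hL _)) (hL _)
          _ = 3 * B := by ring
      calc (T.filter (fun x => Prod.fst x = a)).card ≤ P.card := hstep
        _ = _ - 1 := hcard
        _ ≤ 3 * B - 1 := Nat.sub_le_sub_right hun 1
    have hThigh : T.card ≤ (Fintype.card V - 1) * (3 * B - 1) := by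
      rw [hcardT2]
      calc ∑ a ∈ univ.erase v, (T.filter (fun x => Prod.fst x = a)).card
          ≤ ∑ _a ∈ univ.erase v, (3 * B - 1) := Finset.sum_le_sum hfiberhi
        _ = (univ.erase v).card * (3 * B - 1) := by rw [Finset.sum_const, smul_eq_mul]
        _ = (Fintype.card V - 1) * (3 * B - 1) := by
            rw [Finset.card_erase_of_mem (mem_univ v), Finset.card_univ]
    rw [hSn, Nat.le_div_iff_mul_le (by norm_num : 0 < 2)]
    omega
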